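/- (Triangle inequality in the doubly stochastic case.) Let P be a primitive stochastic matrix on a finite nonempty state space X that is moreover doubly stochastic, with stationary distribution π, F the fundamental matrix, and Ω the resistance distance. Then for all states i, j, k one has Ω_{i,j} ≤ Ω_{i,k} + Ω_{k,j}. In particular, Ω defines a metric on X when P is doubly stochastic. -/

import Mathlib

open Matrix BigOperators Finset

theorem stmt_8
    {X : Type*} [Fintype X] [Nonempty X] [DecidableEq X]
    (P : Matrix X X ℝ)
    (hP_nonneg : ∀ i j, 0 ≤ P i j)
    (hP_row : ∀ i, ∑ j, P i j = 1)
    (hP_prim : ∃ N : ℕ, 1 ≤ N ∧ ∀ i j, 0 < (P ^ N) i j)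
    (pi : X → ℝ)
    (hpi_pos : ∀ i, 0 < pi i)
    (hpi_sum : ∑ i, pi i = 1)
    (hpi_stat : ∀ j, ∑ i, pi i * P i j = pi j)
    (PiM : Matrix X X ℝ)
    (hPiM : ∀ i j, PiM i j = pi j)
    (hP_col : ∀ j, ∑ i, P i j = 1)
    (F : Matrix X X ℝ)
    (hF1 : F * (1 - P + PiM) = 1)
    (hF2 : (1 - P + PiM) * F = 1)
    (Ω : X → X → ℝ)
    (hΩ : ∀ i j, Ω i j = F i i + F j j - F i j - F j i)
    : ∀ i j k, Ω i j ≤ Ω i k + Ω k j := by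
  classical
  set n : ℝ := (Fintype.card X : ℝ) with hn
  have hnpos : 0 < n := by
    have : 0 < Fintype.card X := Fintype.card_pos
    rw [hn]; exact_mod_cast this
  have hnne : n ≠ 0 := ne_of_gt hnpos
  -- entries of A := 1 - P + PiM
  have hAapp : ∀ a b, (1 - P + PiM) a b = (if a = b then (1:ℝ) else 0) - P a b + pi b := by
    intro a b
    simp [Matrix.sub_apply, Matrix.add_apply, Matrix.one_apply, hPiM]
  have hunit : ∀ a b, ∑ l, ((if a = l then (1:ℝ) else 0) - P a l + pi l) * F l b
      = if a = b then (1:ℝ) else 0 := by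
    intro a b
    have h1 : ((1 - P + PiM) * F) a b = ∑ l, ((if a = l then (1:ℝ) else 0) - P a l + pi l) * F l b := by
      rw [Matrix.mul_apply]
      exact Finset.sum_congr rfl fun l _ => by rw [hAapp]
    rw [← h1, hF2, Matrix.one_apply]
  -- generic row-vector identity
  have gen : ∀ v : X → ℝ, ∀ b,
      ∑ l, (∑ m, v m * ((if m = l then (1:ℝ) else 0) - P m l + pi l)) * F l b = v b := by
    intro v b
    calc ∑ l, (∑ m, v m * ((if m = l then (1:ℝ) else 0) - P m l + pi l)) * F l b
        = ∑ l, ∑ m, v m * (((if m = l then (1:ℝ) else 0) - P m l + pi l) * F l b) := by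
          refine Finset.sum_congr rfl fun l _ => ?_
          rw [Finset.sum_mul]
          exact Finset.sum_congr rfl fun m _ => by ring
      _ = ∑ m, ∑ l, v m * (((if m = l then (1:ℝ) else 0) - P m l + pi l) * F l b) :=
          Finset.sum_comm
      _ = ∑ m, v m * (if m = b then (1:ℝ) else 0) := by
          refine Finset.sum_congr rfl fun m _ => ?_
          rw [← Finset.mul_sum, hunit]
      _ = v b := by simp
  -- pi is a left fixed vector of A
  have hpiA : ∀ l, ∑ m, pi m * ((if m = l then (1:ℝ) else 0) - P m l + pi l) = pi l := by
    intro l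
    have e : ∀ m, pi m * ((if m = l then (1:ℝ) else 0) - P m l + pi l)
        = pi m * (if m = l then (1:ℝ) else 0) - pi m * P m l + pi m * pi l := by
      intro m; ring
    rw [Finset.sum_congr rfl fun m _ => e m]
    rw [Finset.sum_add_distrib, Finset.sum_sub_distrib]
    rw [hpi_stat l, ← Finset.sum_mul, hpi_sum]
    simp [Finset.mul_sum]
  -- uniform vector maps to pi under A
  have huA : ∀ l, ∑ m, (1/n) * ((if m = l then (1:ℝ) else 0) - P m l + pi l) = pi l := by
    intro l
    have e : ∀ m, (1/n) * ((if m = l then (1:ℝ) else 0) - P m l + pi l)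
        = (1/n) * (if m = l then (1:ℝ) else 0) - (1/n) * P m l + (1/n) * pi l := by
      intro m; ring
    rw [Finset.sum_congr rfl fun m _ => e m]
    rw [Finset.sum_add_distrib, Finset.sum_sub_distrib]
    rw [← Finset.mul_sum, ← Finset.mul_sum, hP_col l]
    have hs1 : (∑ i : X, if i = l then (1:ℝ) else 0) = 1 := by simp
    have hs2 : ∑ _x : X, (1/n) * pi l = n * ((1/n) * pi l) := by
      rw [Finset.sum_const, Finset.card_univ, nsmul_eq_mul, ← hn]
    rw [hs1, hs2]
    field_simp
    ring
  have hpiF : ∀ b, ∑ l, pi l * F l b = pi b := by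
    intro b
    have := gen pi b
    rwa [Finset.sum_congr rfl fun l _ => by rw [hpiA l]] at this
  have huF : ∀ b, ∑ l, pi l * F l b = 1/n := by
    intro b
    have := gen (fun _ => 1/n) b
    rwa [Finset.sum_congr rfl fun l _ => by rw [huA l]] at this
  have hpiu : ∀ b, pi b = 1/n := fun b => (hpiF b).symm.trans (huF b)
  -- key entrywise relation
  have keyrel : ∀ a b, a ≠ b → F a b = (∑ l, P a l * F l b) - pi b := by
    intro a b hab
    have h1 := hunit a b
    rw [if_neg hab] at h1
    have e : ∀ l, ((if a = l then (1:ℝ) else 0) - P a l + pi l) * F l b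
        = (if a = l then (1:ℝ) else 0) * F l b - P a l * F l b + pi l * F l b := by
      intro l; ring
    rw [Finset.sum_congr rfl fun l _ => e l, Finset.sum_add_distrib, Finset.sum_sub_distrib] at h1
    rw [hpiF b] at h1
    have h2 : ∑ l, (if a = l then (1:ℝ) else 0) * F l b = F a b := by simp
    rw [h2] at h1
    linarith
  -- hitting-time function
  set h : X → X → ℝ := fun a b => n * (F b b - F a b) with hh
  have hdiag : ∀ a, h a a = 0 := by intro a; simp [hh]
  have hnpi : ∀ b, n * pi b = 1 := by
    intro b; rw [hpiu b]; field_simp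
  have hrec : ∀ a b, a ≠ b → h a b = 1 + ∑ l, P a l * h l b := by
    intro a b hab
    have hk := keyrel a b hab
    have e : ∑ l, P a l * h l b = ∑ l, (n * F b b * P a l - n * (P a l * F l b)) := by
      refine Finset.sum_congr rfl fun l _ => ?_
      simp only [hh]; ring
    rw [e, Finset.sum_sub_distrib, ← Finset.mul_sum, ← Finset.mul_sum, hP_row a]
    have := hnpi b
    simp only [hh]
    rw [hk]
    ring_nf
    nlinarith [hnpi b]
  -- nonnegativity of h
  have hnonneg : ∀ a b, 0 ≤ h a b := by
    intro a b
    obtain ⟨i0, -, hi0⟩ := Finset.exists_min_image Finset.univ (fun x => h x b) univ_nonempty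
    by_cases hc : i0 = b
    · have := hi0 a (Finset.mem_univ a)
      rw [hc, hdiag] at this
      exact le_trans (le_of_eq rfl) this
    · exfalso
      have hr := hrec i0 b hc
      have hbig : h i0 b ≤ ∑ l, P i0 l * h l b := by
        have h0 : h i0 b = ∑ l, P i0 l * h i0 b := by
          rw [← Finset.sum_mul, hP_row, one_mul]
        rw [h0]
        exact Finset.sum_le_sum fun l _ =>
          mul_le_mul_of_nonneg_left (hi0 l (Finset.mem_univ l)) (hP_nonneg i0 l)
      linarith
  -- powers of P are nonnegative
  have hpow_nonneg : ∀ t : ℕ, ∀ a b, 0 ≤ (P ^ t) a b := by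
    intro t
    induction t with
    | zero => intro a b; rw [pow_zero, Matrix.one_apply]; positivity
    | succ t ih =>
      intro a b
      rw [pow_succ, Matrix.mul_apply]
      exact Finset.sum_nonneg fun m _ => mul_nonneg (ih a m) (hP_nonneg m b)
  -- triangle inequality for h
  have tri : ∀ b c a, h a b ≤ h a c + h c b := by
    intro b c
    set g : X → ℝ := fun x => h x c + h c b - h x b with hg
    suffices hgpos : ∀ a, 0 ≤ g a by
      intro a
      have := hgpos a
      simp only [hg] at this
      linarith
    have hgc : g c = 0 := by simp [hg, hdiag]
    have hgb : 0 ≤ g b := by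
      simp only [hg, hdiag c]
      have := hnonneg b c
      have := hnonneg c b
      rw [hdiag b]
      linarith
    have hgharm : ∀ x, x ≠ b → x ≠ c → g x = ∑ l, P x l * g l := by
      intro x hxb hxc
      have h1 := hrec x c hxc
      have h2 := hrec x b hxb
      have h3 : h c b = ∑ l, P x l * h c b := by
        rw [← Finset.sum_mul, hP_row, one_mul]
      have e : ∑ l, P x l * g l
          = (∑ l, P x l * h l c) + (∑ l, P x l * h c b) - ∑ l, P x l * h l b := by
        rw [← Finset.sum_add_distrib, ← Finset.sum_sub_distrib]
        refine Finset.sum_congr rfl fun l _ => ?_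
        simp only [hg]; ring
      rw [e, ← h3]
      simp only [hg]
      linarith
    obtain ⟨i0, -, hi0⟩ := Finset.exists_min_image Finset.univ g univ_nonempty
    intro a
    by_contra hneg
    push_neg at hneg
    have hi0neg : g i0 < 0 := lt_of_le_of_lt (hi0 a (Finset.mem_univ a)) hneg
    have claim : ∀ t : ℕ, ∀ l, 0 < (P ^ t) i0 l → g l = g i0 := by
      intro t
      induction t with
      | zero =>
        intro l hl
        rw [pow_zero, Matrix.one_apply] at hl
        rcases eq_or_ne i0 l with hel | hel
        · rw [hel]
        · rw [if_neg hel] at hl; exact absurd hl (lt_irrefl 0)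
      | succ t ih =>
        intro l hl
        rw [pow_succ, Matrix.mul_apply] at hl
        obtain ⟨m, -, hm⟩ : ∃ m ∈ Finset.univ, 0 < (P ^ t) i0 m * P m l := by
          by_contra hcon
          push_neg at hcon
          have hle : ∑ m, (P ^ t) i0 m * P m l ≤ 0 :=
            Finset.sum_nonpos fun m hmm => hcon m hmm
          linarith
        have hptm : 0 < (P ^ t) i0 m := by
          rcases lt_or_eq_of_le (hpow_nonneg t i0 m) with hlt | heq
          · exact hlt
          · rw [← heq, zero_mul] at hm; exact absurd hm (lt_irrefl 0)
        have hpl : 0 < P m l := by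
          rcases lt_or_eq_of_le (hP_nonneg m l) with hlt | heq
          · exact hlt
          · rw [← heq, mul_zero] at hm; exact absurd hm (lt_irrefl 0)
        have hgm : g m = g i0 := ih m hptm
        have hmb : m ≠ b := by
          intro e; rw [e] at hgm; rw [hgm] at hgb; linarith
        have hmc : m ≠ c := by
          intro e; rw [e] at hgm; rw [hgm] at hgc; linarith
        have hhm := hgharm m hmb hmc
        have hzero : ∑ l', P m l' * (g l' - g m) = 0 := by
          have e : ∑ l', P m l' * (g l' - g m)
              = (∑ l', P m l' * g l') - (∑ l', P m l') * g m := by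
            rw [Finset.sum_mul, ← Finset.sum_sub_distrib]
            exact Finset.sum_congr rfl fun l' _ => by ring
          rw [e, hP_row, one_mul, ← hhm, sub_self]
        have heach := (Finset.sum_eq_zero_iff_of_nonneg (fun l' _ =>
          mul_nonneg (hP_nonneg m l')
            (sub_nonneg.2 (hgm ▸ hi0 l' (Finset.mem_univ l'))))).mp hzero l (Finset.mem_univ l)
        rcases mul_eq_zero.mp heach with hz | hz
        · exact absurd hz (ne_of_gt hpl)
        · have : g l = g m := by linarith
          rw [this, hgm]
    obtain ⟨N, -, hNpos⟩ := hP_prim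
    have := claim N c (hNpos i0 c)
    rw [hgc] at this
    linarith
  intro i j k
  have h1 := tri j k i
  have h2 := tri i k j
  have e1 : n * Ω i j = h i j + h j i := by
    rw [hΩ]; simp only [hh]; ring
  have e2 : n * Ω i k = h i k + h k i := by
    rw [hΩ]; simp only [hh]; ring
  have e3 : n * Ω k j = h k j + h j k := by
    rw [hΩ]; simp only [hh]; ring
  have hmul : n * Ω i j ≤ n * (Ω i k + Ω k j) := by
    rw [mul_add, e1, e2, e3]; linarith
  exact le_of_mul_le_mul_left hmul hnpos
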